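/- Let X be a nilpotent self-adjoint endomorphism of \u2102^m with respect to a nondegenerate symplectic form, with Jordan partition having conjugate partition (s_1, s_2, ...). Then the dimension of the Sp(V)-orbit of X under conjugation equals (m^2 - \u03a3_i s_i^2)/2. -/

import Mathlib

open Matrix

open Module LinearMap Submodule

set_option linter.unusedSectionVars false
set_option maxHeartbeats 1000000

/-- The isometry Lie algebra of the bilinear form with matrix `J`:
`{Z : Zᵀ * J + J * Z = 0}`. -/
noncomputable def isomAlg (m : ℕ) (J : Matrix (Fin m) (Fin m) ℂ) :
    Submodule ℂ (Matrix (Fin m) (Fin m) ℂ) :=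
  LinearMap.ker
    ((LinearMap.mulRight ℂ J).comp
        (Matrix.transposeLinearEquiv (Fin m) (Fin m) ℂ ℂ).toLinearMap +
      LinearMap.mulLeft ℂ J)

/-- The stabilizer (centralizer) of `X` inside the isometry Lie algebra of `J`. -/
noncomputable def stabAlg (m : ℕ) (J X : Matrix (Fin m) (Fin m) ℂ) :
    Submodule ℂ (Matrix (Fin m) (Fin m) ℂ) :=
  isomAlg m J ⊓ LinearMap.ker (LinearMap.mulLeft ℂ X - LinearMap.mulRight ℂ X)



section Commutant
variable {V : Type} [AddCommGroup V] [Module ℂ V]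

noncomputable def adE (f : Module.End ℂ V) :
    Module.End ℂ V →ₗ[ℂ] Module.End ℂ V :=
  LinearMap.mulLeft ℂ f - LinearMap.mulRight ℂ f

lemma mem_ker_adE {f φ : Module.End ℂ V} :
    φ ∈ LinearMap.ker (adE f) ↔ f ∘ₗ φ = φ ∘ₗ f := by
  simp [adE, LinearMap.mem_ker, sub_eq_zero, LinearMap.mulLeft_apply,
    LinearMap.mulRight_apply, Module.End.mul_eq_comp]

lemma commutant_step [FiniteDimensional ℂ V] (f : Module.End ℂ V) :
    finrank ℂ (LinearMap.ker (adE f)) =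
      finrank ℂ (LinearMap.ker (adE (f.restrict
          (fun x (_ : x ∈ LinearMap.range f) => LinearMap.mem_range_self f x)))) +
        finrank ℂ (LinearMap.ker f) * finrank ℂ (LinearMap.ker f) := by
  classical
  set W := LinearMap.range f with hWdef
  set f' : Module.End ℂ ↥W := f.restrict
      (fun x (_ : x ∈ W) => LinearMap.mem_range_self f x) with hf'def
  have hf'coe : ∀ x : W, (↑(f' x) : V) = f ↑x := fun x => rfl
  have hmapsTo : ∀ φ : Module.End ℂ V, φ ∈ LinearMap.ker (adE f) →
      ∀ x ∈ W, φ x ∈ W := by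
    intro φ hφ x hx
    obtain ⟨y, rfl⟩ := hx
    rw [mem_ker_adE] at hφ
    have h : φ (f y) = f (φ y) := by
      conv_lhs => rw [← LinearMap.comp_apply, ← hφ]
      rfl
    rw [h]; exact LinearMap.mem_range_self f _
  let ρ : ↥(LinearMap.ker (adE f)) →ₗ[ℂ] Module.End ℂ ↥W :=
    { toFun := fun φ => (φ : Module.End ℂ V).restrict (hmapsTo φ φ.2)
      map_add' := by
        intro φ ψ; ext x
        simp [LinearMap.restrict_coe_apply]
      map_smul' := by
        intro c φ; ext x
        simp [LinearMap.restrict_coe_apply] }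
  have hρcoe : ∀ (φ : ↥(LinearMap.ker (adE f))) (x : W), (↑(ρ φ x) : V) = (φ : Module.End ℂ V) ↑x :=
    fun φ x => rfl
  have h1 : finrank ℂ (LinearMap.ker (adE f)) =
      finrank ℂ (LinearMap.range ρ) + finrank ℂ (LinearMap.ker ρ) :=
    (LinearMap.finrank_range_add_finrank_ker ρ).symm
  obtain ⟨U, hU⟩ := Submodule.exists_isCompl W
  obtain ⟨s, hs⟩ := f.rangeRestrict.exists_rightInverse_of_surjective
    (by rw [LinearMap.range_rangeRestrict])
  have hfs : ∀ w : W, f (s w) = ↑w := by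
    intro w
    have := DFunLike.congr_fun hs w
    simp only [LinearMap.comp_apply, LinearMap.id_apply] at this
    calc f (s w) = ↑(f.rangeRestrict (s w)) := rfl
    _ = ↑w := by rw [this]
  set prW : V →ₗ[ℂ] ↥W := W.linearProjOfIsCompl U hU with hprW
  set prU : V →ₗ[ℂ] ↥U := U.linearProjOfIsCompl W hU.symm with hprU
  have hdecomp : ∀ v : V, (↑(prW v) : V) + ↑(prU v) = v :=
    fun v => Submodule.projection_add_projection_eq_self hU v
  have hrange : LinearMap.range ρ = LinearMap.ker (adE f') := by
    apply le_antisymm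
    · rintro ψ ⟨φ, rfl⟩
      rw [mem_ker_adE]
      have hφ := mem_ker_adE.mp φ.2
      ext x
      have : (↑((f' ∘ₗ ρ φ) x) : V) = ↑((ρ φ ∘ₗ f') x) := by
        simp only [LinearMap.comp_apply, hf'coe, hρcoe]
        calc f ((φ : Module.End ℂ V) ↑x) = (f ∘ₗ (φ : Module.End ℂ V)) ↑x := rfl
        _ = ((φ : Module.End ℂ V) ∘ₗ f) ↑x := by rw [hφ]
        _ = (φ : Module.End ℂ V) (f ↑x) := rfl
      exact this
    · intro ψ hψ
      rw [mem_ker_adE] at hψ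
      set φ : Module.End ℂ V :=
        W.subtype ∘ₗ ψ ∘ₗ prW + s ∘ₗ ψ ∘ₗ f.rangeRestrict ∘ₗ U.subtype ∘ₗ prU with hφdef
      have hφapp : ∀ v : V, φ v = ↑(ψ (prW v)) + s (ψ (f.rangeRestrict ↑(prU v))) :=
        fun v => rfl
      have hrr : ∀ v : V, (↑(f.rangeRestrict v) : V) = f v := fun v => rfl
      have hφmem : φ ∈ LinearMap.ker (adE f) := by
        rw [mem_ker_adE]
        ext v
        simp only [LinearMap.comp_apply, hφapp]
        have hfv : f v ∈ W := LinearMap.mem_range_self f v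
        have h2 : prW (f v) = f.rangeRestrict v := by
          have : f v = ↑(f.rangeRestrict v) := rfl
          rw [this, hprW]
          exact Submodule.linearProjOfIsCompl_apply_left hU _
        have h3 : prU (f v) = 0 := by
          have : f v = ↑(f.rangeRestrict v) := rfl
          rw [this, hprU]
          exact Submodule.linearProjOfIsCompl_apply_right hU.symm _
        rw [h2, h3]
        simp only [Submodule.coe_zero, map_zero]
        rw [map_add, hfs]
        have h4 : f (↑(ψ (prW v)) : V) = ↑(f' (ψ (prW v))) := rfl
        rw [h4]
        have h5 : f' (ψ (prW v)) = ψ (f' (prW v)) := by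
          have := DFunLike.congr_fun hψ (prW v)
          simpa using this
        have h6 : f' (prW v) + f.rangeRestrict ↑(prU v) = f.rangeRestrict v := by
          apply Subtype.ext
          simp only [Submodule.coe_add, hf'coe, hrr]
          rw [← map_add, hdecomp]
        rw [h5, ← Submodule.coe_add, ← map_add, h6, add_zero]
      refine ⟨⟨φ, hφmem⟩, ?_⟩
      ext x
      rw [hρcoe]
      show φ ↑x = ↑(ψ x)
      rw [hφapp]
      have h7 : prW ↑x = x := Submodule.linearProjOfIsCompl_apply_left hU x
      have h8 : prU ↑x = 0 := Submodule.linearProjOfIsCompl_apply_right hU.symm x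
      rw [h7, h8]
      simp
  have hker : finrank ℂ (LinearMap.ker ρ) =
      finrank ℂ (LinearMap.ker f) * finrank ℂ (LinearMap.ker f) := by
    let β : ((V ⧸ W) →ₗ[ℂ] ↥(LinearMap.ker f)) →ₗ[ℂ] Module.End ℂ V :=
      { toFun := fun g => (LinearMap.ker f).subtype ∘ₗ g ∘ₗ W.mkQ
        map_add' := by intro g h; ext v; simp
        map_smul' := by intro c g; ext v; simp }
    have hβapp : ∀ g v, β g v = ↑(g (W.mkQ v)) := fun g v => rfl
    have hβinj : Function.Injective β := by
      rw [← LinearMap.ker_eq_bot]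
      apply (Submodule.eq_bot_iff _).mpr
      intro g hg
      refine LinearMap.ext fun q => ?_
      obtain ⟨v, rfl⟩ := W.mkQ_surjective q
      have h0 := DFunLike.congr_fun (LinearMap.mem_ker.mp hg) v
      apply Subtype.ext
      simpa [hβapp] using h0
    have hβrange : LinearMap.range β =
        Submodule.map (LinearMap.ker (adE f)).subtype (LinearMap.ker ρ) := by
      apply le_antisymm
      · rintro _ ⟨g, rfl⟩
        have hm : β g ∈ LinearMap.ker (adE f) := by
          rw [mem_ker_adE]
          ext v
          simp only [LinearMap.comp_apply, hβapp]
          have hx1 : f ↑(g (W.mkQ v)) = 0 := (g (W.mkQ v)).2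
          have hx2 : W.mkQ (f v) = 0 := by
            rw [W.mkQ_apply]
            exact (Submodule.Quotient.mk_eq_zero W).mpr (LinearMap.mem_range_self f v)
          rw [hx1, hx2]
          simp
        refine ⟨⟨β g, hm⟩, ?_, rfl⟩
        show ρ ⟨β g, hm⟩ = 0
        ext x
        rw [hρcoe]
        show β g ↑x = _
        rw [hβapp]
        have : W.mkQ ↑x = 0 := (Submodule.Quotient.mk_eq_zero W).mpr x.2
        rw [this]
        simp
      · rintro _ ⟨⟨φ, hφ⟩, hφk, rfl⟩
        have hkill : ∀ x ∈ W, φ x = 0 := by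
          intro x hx
          have h0 := DFunLike.congr_fun (LinearMap.mem_ker.mp hφk) ⟨x, hx⟩
          have h1 := congrArg Subtype.val h0
          simpa [hρcoe] using h1
        have hmemk : ∀ v, φ v ∈ LinearMap.ker f := by
          intro v
          rw [LinearMap.mem_ker]
          have hc := mem_ker_adE.mp hφ
          have h2 : f (φ v) = φ (f v) := by
            calc f (φ v) = (f ∘ₗ φ) v := rfl
            _ = (φ ∘ₗ f) v := by rw [hc]
            _ = φ (f v) := rfl
          rw [h2]
          exact hkill _ (LinearMap.mem_range_self f v)
        refine ⟨W.liftQ (LinearMap.codRestrict (LinearMap.ker f) φ hmemk) ?_, ?_⟩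
        · intro x hx
          rw [LinearMap.mem_ker]
          apply Subtype.ext
          simpa using hkill x hx
        · refine LinearMap.ext fun v => ?_
          rw [hβapp, W.mkQ_apply, Submodule.liftQ_apply]
          simp
    have e1 : finrank ℂ (LinearMap.ker ρ) =
        finrank ℂ (Submodule.map (LinearMap.ker (adE f)).subtype (LinearMap.ker ρ)) :=
      (Submodule.equivSubtypeMap _ _).finrank_eq
    rw [e1, ← hβrange, LinearMap.finrank_range_of_inj hβinj, Module.finrank_linearMap]
    congr 1
    have q1 := Submodule.finrank_quotient_add_finrank W
    have q2 := LinearMap.finrank_range_add_finrank_ker f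
    have q3 : finrank ℂ ↥W = finrank ℂ ↥(LinearMap.range f) := rfl
    omega
  rw [h1, hrange, hker]

lemma nilp_pow_finrank [FiniteDimensional ℂ V] (f : Module.End ℂ V)
    (hf : IsNilpotent f) : f ^ (Module.finrank ℂ V) = 0 := by
  have h := hf.charpoly_eq_X_pow_finrank
  have h2 := f.aeval_self_charpoly
  rw [h] at h2
  simpa using h2

lemma range_restrict_pow [FiniteDimensional ℂ V] (f : Module.End ℂ V) (i : ℕ) :
    finrank ℂ (LinearMap.range ((f.restrict
      (fun x (_ : x ∈ LinearMap.range f) => LinearMap.mem_range_self f x)) ^ i)) =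
    finrank ℂ (LinearMap.range (f ^ (i + 1))) := by
  set W := LinearMap.range f
  set f' : Module.End ℂ ↥W := f.restrict
      (fun x (_ : x ∈ W) => LinearMap.mem_range_self f x) with hf'def
  have hcoe : ∀ x : W, (↑((f' ^ i) x) : V) = (f ^ i) ↑x := by
    intro x
    rw [hf'def, Module.End.pow_restrict]
    rfl
  have hmap : Submodule.map W.subtype (LinearMap.range (f' ^ i)) =
      LinearMap.range (f ^ (i + 1)) := by
    apply le_antisymm
    · rintro _ ⟨_, ⟨w, rfl⟩, rfl⟩
      obtain ⟨u, hu⟩ := w.2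
      refine ⟨u, ?_⟩
      show (f ^ (i + 1)) u = W.subtype ((f' ^ i) w)
      rw [Submodule.coe_subtype, hcoe, pow_succ]
      rw [Module.End.mul_apply, hu]
    · rintro _ ⟨u, rfl⟩
      refine ⟨(f' ^ i) ⟨f u, LinearMap.mem_range_self f u⟩,
        ⟨⟨f u, LinearMap.mem_range_self f u⟩, rfl⟩, ?_⟩
      show W.subtype _ = _
      rw [Submodule.coe_subtype, hcoe, pow_succ, Module.End.mul_apply]
  rw [← hmap]
  exact (Submodule.equivSubtypeMap W (LinearMap.range (f' ^ i))).finrank_eq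

lemma commutant_dim : ∀ (n : ℕ) (V : Type) [AddCommGroup V] [Module ℂ V]
    [FiniteDimensional ℂ V], finrank ℂ V = n → ∀ f : Module.End ℂ V, IsNilpotent f →
    (finrank ℂ (LinearMap.ker (adE f)) : ℤ) =
      ∑ i ∈ Finset.range n, ((finrank ℂ (LinearMap.range (f ^ i)) : ℤ) -
        (finrank ℂ (LinearMap.range (f ^ (i + 1))) : ℤ)) ^ 2 := by
  intro n
  induction n using Nat.strong_induction_on with
  | _ n IH =>
    intro V _ _ _ hV f hf
    rcases Nat.eq_zero_or_pos n with h0 | hpos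
    · subst h0
      have hsub : Subsingleton V := Module.finrank_zero_iff.mp hV
      have hE : finrank ℂ (Module.End ℂ V) = 0 :=
        Module.finrank_zero_iff.mpr inferInstance
      have hle := Submodule.finrank_le (LinearMap.ker (adE f))
      rw [hE] at hle
      simp [Nat.le_zero.mp hle]
    · have hnt : Nontrivial V := by
        apply Module.nontrivial_of_finrank_pos (R := ℂ)
        omega
      set W := LinearMap.range f with hWdef
      set f' : Module.End ℂ ↥W := f.restrict
          (fun x (_ : x ∈ W) => LinearMap.mem_range_self f x) with hf'def
      have hf' : IsNilpotent f' := by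
        obtain ⟨k, hk⟩ := hf
        refine ⟨k, ?_⟩
        rw [hf'def, Module.End.pow_restrict]
        ext x
        simp [hk]
      have hWne : W ≠ ⊤ := by
        intro hW
        obtain ⟨k, hk⟩ := hf
        have hsur : ∀ j, LinearMap.range (f ^ j) = ⊤ := by
          intro j
          induction j with
          | zero => rw [pow_zero, Module.End.one_eq_id]; exact LinearMap.range_id
          | succ j ihj =>
            rw [pow_succ']
            rw [Module.End.mul_eq_comp, LinearMap.range_comp_of_range_eq_top _ ihj]
            exact hW
        have h9 := hsur k
        rw [hk] at h9
        simp only [LinearMap.range_zero] at h9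
        exact absurd h9 bot_ne_top
      have hWlt : finrank ℂ ↥W < n := by
        rw [← hV]
        exact Submodule.finrank_lt hWne
      have hrec := commutant_step f
      have hIH := IH _ hWlt ↥W rfl f' hf'
      have hB : ∀ i, finrank ℂ (LinearMap.range (f' ^ i)) =
          finrank ℂ (LinearMap.range (f ^ (i + 1))) := fun i => range_restrict_pow f i
      have hzero : ∀ j, finrank ℂ ↥W ≤ j → finrank ℂ (LinearMap.range (f' ^ j)) = 0 := by
        intro j hj
        have h1 : f' ^ j = 0 := pow_eq_zero_of_le hj (nilp_pow_finrank f' hf')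
        rw [h1, LinearMap.range_zero]
        exact finrank_bot ℂ _
      obtain ⟨m', rfl⟩ : ∃ m', n = m' + 1 := ⟨n - 1, by omega⟩
      have hr0 : finrank ℂ (LinearMap.range (f ^ 0)) = m' + 1 := by
        rw [pow_zero, Module.End.one_eq_id, LinearMap.range_id, finrank_top]
        exact hV
      have hrn : finrank ℂ ↥W + finrank ℂ (LinearMap.ker f) = m' + 1 := by
        rw [hWdef, ← hV]
        exact LinearMap.finrank_range_add_finrank_ker f
      have hsplit := Finset.sum_range_succ'
        (fun i => ((finrank ℂ (LinearMap.range (f ^ i)) : ℤ) -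
          (finrank ℂ (LinearMap.range (f ^ (i + 1))) : ℤ)) ^ 2) m'
      rw [hsplit]
      have hpad1 : ∑ i ∈ Finset.range m',
          ((finrank ℂ (LinearMap.range (f ^ (i + 1))) : ℤ) -
            (finrank ℂ (LinearMap.range (f ^ (i + 1 + 1))) : ℤ)) ^ 2 =
          ∑ i ∈ Finset.range m',
          ((finrank ℂ (LinearMap.range (f' ^ i)) : ℤ) -
            (finrank ℂ (LinearMap.range (f' ^ (i + 1))) : ℤ)) ^ 2 :=
        Finset.sum_congr rfl (fun i _ => by rw [hB i, hB (i + 1)])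
      have hpad2 : ∑ i ∈ Finset.range (finrank ℂ ↥W),
          ((finrank ℂ (LinearMap.range (f' ^ i)) : ℤ) -
            (finrank ℂ (LinearMap.range (f' ^ (i + 1))) : ℤ)) ^ 2 =
          ∑ i ∈ Finset.range m',
          ((finrank ℂ (LinearMap.range (f' ^ i)) : ℤ) -
            (finrank ℂ (LinearMap.range (f' ^ (i + 1))) : ℤ)) ^ 2 := by
        refine Finset.sum_subset (Finset.range_subset_range.mpr (by omega)) ?_
        intro i _ hi
        rw [Finset.mem_range, not_lt] at hi
        rw [hzero i hi, hzero (i + 1) (by omega)]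
        simp
      rw [hpad1, ← hpad2, ← hIH]
      have hfirst : ((finrank ℂ (LinearMap.range (f ^ 0)) : ℤ) -
          (finrank ℂ (LinearMap.range (f ^ (0 + 1))) : ℤ)) ^ 2 =
          ((finrank ℂ (LinearMap.ker f) : ℤ)) ^ 2 := by
        congr 1
        rw [hr0]
        have : finrank ℂ (LinearMap.range (f ^ (0 + 1))) = finrank ℂ ↥W := by
          rw [pow_one, hWdef]
        rw [this]
        omega
      rw [hfirst, hrec]
      push_cast
      ring

end Commutant

section Transfer

lemma mem_ker_mulLR {A : Type*} [Ring A] [Algebra ℂ A] {a z : A} :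
    z ∈ LinearMap.ker (LinearMap.mulLeft ℂ a - LinearMap.mulRight ℂ a) ↔ a * z = z * a := by
  simp [LinearMap.mem_ker, sub_eq_zero]

lemma ker_mulLR_map {A B : Type*} [Ring A] [Ring B] [Algebra ℂ A] [Algebra ℂ B]
    (e : A ≃ₐ[ℂ] B) (a : A) :
    Submodule.map (e.toLinearEquiv : A →ₗ[ℂ] B)
      (LinearMap.ker (LinearMap.mulLeft ℂ a - LinearMap.mulRight ℂ a)) =
      LinearMap.ker (LinearMap.mulLeft ℂ (e a) - LinearMap.mulRight ℂ (e a)) := by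
  ext b
  constructor
  · rintro ⟨z, hz, rfl⟩
    rw [SetLike.mem_coe, mem_ker_mulLR] at hz
    rw [mem_ker_mulLR]
    show e a * e z = e z * e a
    rw [← _root_.map_mul, ← _root_.map_mul, hz]
  · intro hb
    rw [mem_ker_mulLR] at hb
    refine ⟨e.symm b, ?_, by simp⟩
    rw [SetLike.mem_coe, mem_ker_mulLR]
    apply e.injective
    rw [_root_.map_mul, _root_.map_mul, e.apply_symm_apply, hb]

lemma matrix_commutant_dim (m : ℕ) (X : Matrix (Fin m) (Fin m) ℂ) (hnil : IsNilpotent X) :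
    (finrank ℂ (LinearMap.ker (LinearMap.mulLeft ℂ X - LinearMap.mulRight ℂ X)) : ℤ) =
      ∑ i ∈ Finset.range m, (((X ^ i).rank : ℤ) - ((X ^ (i + 1)).rank : ℤ)) ^ 2 := by
  set e := Matrix.toLinAlgEquiv' (R := ℂ) (n := Fin m) with hedef
  set f : Module.End ℂ (Fin m → ℂ) := e X with hfdef
  have hepow : ∀ i : ℕ, e (X ^ i) = (X ^ i).mulVecLin := by
    intro i
    refine LinearMap.ext fun v => ?_
    rw [Matrix.toLinAlgEquiv'_apply, Matrix.mulVecLin_apply]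
  have hker : finrank ℂ (LinearMap.ker (LinearMap.mulLeft ℂ X - LinearMap.mulRight ℂ X)) =
      finrank ℂ (LinearMap.ker (adE f)) := by
    have h := LinearEquiv.finrank_map_eq e.toLinearEquiv
      (LinearMap.ker (LinearMap.mulLeft ℂ X - LinearMap.mulRight ℂ X))
    rw [ker_mulLR_map e X] at h
    exact h.symm
  have hf : IsNilpotent f := hnil.map e
  have hrank : ∀ i : ℕ, (X ^ i).rank = finrank ℂ (LinearMap.range (f ^ i)) := by
    intro i
    have h1 : f ^ i = (X ^ i).mulVecLin := by rw [hfdef, ← map_pow, hepow]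
    rw [h1]
    rfl
  rw [hker, commutant_dim m (Fin m → ℂ) (Module.finrank_fin_fun (R := ℂ)) f hf]
  exact Finset.sum_congr rfl fun i _ => by rw [hrank i, hrank (i + 1)]

end Transfer


lemma flip_rank {M N : Type*} [AddCommGroup M] [Module ℂ M] [AddCommGroup N] [Module ℂ N]
    [FiniteDimensional ℂ M] [FiniteDimensional ℂ N] (B : M →ₗ[ℂ] N →ₗ[ℂ] ℂ) :
    finrank ℂ (LinearMap.range B.flip) = finrank ℂ (LinearMap.range B) := by
  have h1 : B.flip = B.dualMap.comp (Module.Dual.eval ℂ N) := by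
    ext n x; rfl
  rw [h1, LinearMap.range_comp_of_range_eq_top]
  · exact LinearMap.finrank_range_dualMap_eq_finrank_range B
  · rw [LinearMap.range_eq_top]
    exact (Module.evalEquiv ℂ N).surjective


section Symp
variable {m : ℕ} {J : Matrix (Fin m) (Fin m) ℂ}

lemma trace_mul_std (D : Matrix (Fin m) (Fin m) ℂ) (i j : Fin m) :
    Matrix.trace (D * Matrix.single i j 1) = D j i := by
  simp [Matrix.trace, Matrix.diag, Matrix.mul_apply, Matrix.single,
    ite_and, Finset.sum_ite_eq, Finset.sum_ite_eq']

section Inv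
variable (hJskew : Jᵀ = -J) (hJ : IsUnit J)
include hJ

lemma hK1' : J⁻¹ * J = 1 := Matrix.nonsing_inv_mul J ((Matrix.isUnit_iff_isUnit_det J).mp hJ)
lemma hK2' : J * J⁻¹ = 1 := Matrix.mul_nonsing_inv J ((Matrix.isUnit_iff_isUnit_det J).mp hJ)

include hJskew in
lemma hKT' : (J⁻¹)ᵀ = -(J⁻¹) := by
  have h := congrArg Matrix.transpose (hK2' hJ)
  rw [Matrix.transpose_mul, Matrix.transpose_one, hJskew, Matrix.mul_neg] at h
  have h2 : (J⁻¹)ᵀ * J = -1 := neg_eq_iff_eq_neg.mp h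
  calc (J⁻¹)ᵀ = (J⁻¹)ᵀ * (J * J⁻¹) := by rw [hK2' hJ, Matrix.mul_one]
  _ = ((J⁻¹)ᵀ * J) * J⁻¹ := by rw [Matrix.mul_assoc]
  _ = (-1) * J⁻¹ := by rw [h2]
  _ = -(J⁻¹) := by rw [Matrix.neg_mul, Matrix.one_mul]
end Inv

noncomputable def symAlg (m : ℕ) (J : Matrix (Fin m) (Fin m) ℂ) :
    Submodule ℂ (Matrix (Fin m) (Fin m) ℂ) :=
  LinearMap.ker
    ((LinearMap.mulRight ℂ J).comp
        (Matrix.transposeLinearEquiv (Fin m) (Fin m) ℂ ℂ).toLinearMap -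
      LinearMap.mulLeft ℂ J)

lemma memP {Z : Matrix (Fin m) (Fin m) ℂ} :
    Z ∈ isomAlg m J ↔ Zᵀ * J = -(J * Z) := by
  simp [isomAlg, LinearMap.mem_ker, add_eq_zero_iff_eq_neg]

lemma memQ {Z : Matrix (Fin m) (Fin m) ℂ} :
    Z ∈ symAlg m J ↔ Zᵀ * J = J * Z := by
  simp [symAlg, LinearMap.mem_ker, sub_eq_zero]

section Facts
variable (hJskew : Jᵀ = -J) (hJ : IsUnit J)
include hJskew hJ

lemma Pdecomp (Z : Matrix (Fin m) (Fin m) ℂ) :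
    (2⁻¹ : ℂ) • (Z - J⁻¹ * Zᵀ * J) ∈ isomAlg m J := by
  have k1 := hK1' hJ; have k2 := hK2' hJ; have kT := hKT' hJskew hJ
  rw [memP]
  rw [Matrix.transpose_smul, Matrix.transpose_sub, Matrix.transpose_mul, Matrix.transpose_mul,
    Matrix.transpose_transpose, kT, hJskew]
  rw [Matrix.smul_mul, Matrix.mul_smul, ← smul_neg]
  congr 1
  have hJJ : ∀ A : Matrix (Fin m) (Fin m) ℂ, J * (J⁻¹ * A) = A := fun A => by
    rw [← Matrix.mul_assoc, k2, Matrix.one_mul]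
  simp only [Matrix.neg_mul, Matrix.mul_neg, neg_neg, Matrix.mul_assoc, Matrix.mul_sub,
    Matrix.sub_mul, Matrix.mul_add, Matrix.add_mul, k1, k2, Matrix.mul_one, Matrix.one_mul,
    hJJ, neg_sub]

lemma Qdecomp (Z : Matrix (Fin m) (Fin m) ℂ) :
    (2⁻¹ : ℂ) • (Z + J⁻¹ * Zᵀ * J) ∈ symAlg m J := by
  have k1 := hK1' hJ; have k2 := hK2' hJ; have kT := hKT' hJskew hJ
  rw [memQ]
  rw [Matrix.transpose_smul, Matrix.transpose_add, Matrix.transpose_mul, Matrix.transpose_mul,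
    Matrix.transpose_transpose, kT, hJskew]
  rw [Matrix.smul_mul, Matrix.mul_smul]
  congr 1
  have hJJ : ∀ A : Matrix (Fin m) (Fin m) ℂ, J * (J⁻¹ * A) = A := fun A => by
    rw [← Matrix.mul_assoc, k2, Matrix.one_mul]
  simp only [Matrix.neg_mul, Matrix.mul_neg, neg_neg, Matrix.mul_assoc, Matrix.mul_sub,
    Matrix.sub_mul, Matrix.mul_add, Matrix.add_mul, k1, k2, Matrix.mul_one, Matrix.one_mul,
    hJJ, neg_sub]
  abel

lemma PQtop : isomAlg m J ⊔ symAlg m J = ⊤ := by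
  rw [eq_top_iff]
  intro Z _
  have hsum : Z = (2⁻¹ : ℂ) • (Z - J⁻¹ * Zᵀ * J) + (2⁻¹ : ℂ) • (Z + J⁻¹ * Zᵀ * J) := by
    module
  rw [hsum]
  exact Submodule.add_mem_sup (Pdecomp hJskew hJ Z) (Qdecomp hJskew hJ Z)

lemma PQbot : isomAlg m J ⊓ symAlg m J = ⊥ := by
  rw [eq_bot_iff]
  rintro Z ⟨hZP, hZQ⟩
  rw [SetLike.mem_coe, memP] at hZP
  rw [SetLike.mem_coe, memQ] at hZQ
  have h : J * Z = 0 := by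
    have := hZP.symm.trans hZQ
    -- -(J*Z) = J*Z
    have h2 : (2 : ℂ) • (J * Z) = 0 := by
      calc (2 : ℂ) • (J * Z) = J * Z + J * Z := two_smul _ _
      _ = -(J * Z) + J * Z := by rw [this]
      _ = 0 := neg_add_cancel _
    rcases smul_eq_zero.mp h2 with h | h
    · norm_num at h
    · exact h
  have : Z = 0 := by
    calc Z = J⁻¹ * (J * Z) := by rw [← Matrix.mul_assoc, hK1' hJ, Matrix.one_mul]
    _ = 0 := by rw [h, Matrix.mul_zero]
  simp [this]

lemma thetaComm (X Z : Matrix (Fin m) (Fin m) ℂ) (hsa : Xᵀ * J = J * X)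
    (hZ : X * Z = Z * X) : X * (J⁻¹ * Zᵀ * J) = J⁻¹ * Zᵀ * J * X := by
  have k1 := hK1' hJ; have k2 := hK2' hJ
  have hXJi : X * J⁻¹ = J⁻¹ * Xᵀ := by
    have h1 : Xᵀ = J * X * J⁻¹ := by
      calc Xᵀ = Xᵀ * (J * J⁻¹) := by rw [k2, Matrix.mul_one]
      _ = Xᵀ * J * J⁻¹ := by rw [Matrix.mul_assoc]
      _ = J * X * J⁻¹ := by rw [hsa]
    rw [h1, ← Matrix.mul_assoc, ← Matrix.mul_assoc, k1, Matrix.one_mul]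
  calc X * (J⁻¹ * Zᵀ * J) = X * J⁻¹ * Zᵀ * J := by
        rw [Matrix.mul_assoc X, ← Matrix.mul_assoc X]
  _ = J⁻¹ * Xᵀ * Zᵀ * J := by rw [hXJi]
  _ = J⁻¹ * (Xᵀ * Zᵀ) * J := by rw [Matrix.mul_assoc J⁻¹]
  _ = J⁻¹ * ((Z * X)ᵀ) * J := by rw [Matrix.transpose_mul]
  _ = J⁻¹ * ((X * Z)ᵀ) * J := by rw [← hZ]
  _ = J⁻¹ * (Zᵀ * Xᵀ) * J := by rw [Matrix.transpose_mul]
  _ = J⁻¹ * Zᵀ * (Xᵀ * J) := by simp only [Matrix.mul_assoc]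
  _ = J⁻¹ * Zᵀ * (J * X) := by rw [hsa]
  _ = J⁻¹ * Zᵀ * J * X := by rw [Matrix.mul_assoc (J⁻¹ * Zᵀ)]

omit hJskew hJ in
lemma TmapsQ (X A : Matrix (Fin m) (Fin m) ℂ) (hsa : Xᵀ * J = J * X)
    (hA : A ∈ isomAlg m J) : X * A - A * X ∈ symAlg m J := by
  have hA' : Aᵀ * J = -(J * A) := memP.mp hA
  rw [memQ]
  calc (X * A - A * X)ᵀ * J = (Aᵀ * Xᵀ - Xᵀ * Aᵀ) * J := by
        rw [Matrix.transpose_sub, Matrix.transpose_mul, Matrix.transpose_mul]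
  _ = Aᵀ * (Xᵀ * J) - Xᵀ * (Aᵀ * J) := by
        rw [Matrix.sub_mul, Matrix.mul_assoc, Matrix.mul_assoc]
  _ = Aᵀ * (J * X) - Xᵀ * (-(J * A)) := by rw [hsa, hA']
  _ = Aᵀ * J * X + Xᵀ * J * A := by
        rw [Matrix.mul_neg, sub_neg_eq_add, Matrix.mul_assoc, Matrix.mul_assoc]
  _ = -(J * A) * X + J * X * A := by rw [hsa, hA']
  _ = J * (X * A - A * X) := by
        rw [Matrix.neg_mul, Matrix.mul_sub, Matrix.mul_assoc, Matrix.mul_assoc]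
        abel

omit hJskew hJ in
lemma TmapsP (X B : Matrix (Fin m) (Fin m) ℂ) (hsa : Xᵀ * J = J * X)
    (hB : B ∈ symAlg m J) : B * X - X * B ∈ isomAlg m J := by
  have hB' : Bᵀ * J = J * B := memQ.mp hB
  rw [memP]
  calc (B * X - X * B)ᵀ * J = (Xᵀ * Bᵀ - Bᵀ * Xᵀ) * J := by
        rw [Matrix.transpose_sub, Matrix.transpose_mul, Matrix.transpose_mul]
  _ = Xᵀ * (Bᵀ * J) - Bᵀ * (Xᵀ * J) := by
        rw [Matrix.sub_mul, Matrix.mul_assoc, Matrix.mul_assoc]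
  _ = Xᵀ * (J * B) - Bᵀ * (J * X) := by rw [hsa, hB']
  _ = Xᵀ * J * B - Bᵀ * J * X := by rw [Matrix.mul_assoc, Matrix.mul_assoc]
  _ = J * X * B - J * B * X := by rw [hsa, hB']
  _ = -(J * (B * X - X * B)) := by
        rw [Matrix.mul_sub, neg_sub, Matrix.mul_assoc, Matrix.mul_assoc]

lemma nondegQ (W : Matrix (Fin m) (Fin m) ℂ) (hW : W ∈ symAlg m J)
    (h : ∀ B ∈ symAlg m J, Matrix.trace (W * B) = 0) : W = 0 := by
  have k1 := hK1' hJ; have k2 := hK2' hJ; have kT := hKT' hJskew hJ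
  have hWT : Wᵀ = J * W * J⁻¹ := by
    have h0 := memQ.mp hW
    calc Wᵀ = Wᵀ * (J * J⁻¹) := by rw [k2, Matrix.mul_one]
    _ = Wᵀ * J * J⁻¹ := by rw [Matrix.mul_assoc]
    _ = J * W * J⁻¹ := by rw [h0]
  set D := W * J⁻¹ with hDdef
  have hDanti : Dᵀ = -D := by
    rw [hDdef, Matrix.transpose_mul, kT, hWT]
    rw [Matrix.neg_mul, ← Matrix.mul_assoc, ← Matrix.mul_assoc, k1, Matrix.one_mul]
  have hDtr : ∀ A' : Matrix (Fin m) (Fin m) ℂ, A'ᵀ = -A' →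
      Matrix.trace (D * A') = 0 := by
    intro A' hA'
    have hBmem : J⁻¹ * A' ∈ symAlg m J := by
      rw [memQ, Matrix.transpose_mul, kT, hA']
      rw [Matrix.neg_mul, Matrix.mul_neg, neg_neg, Matrix.mul_assoc, k1, Matrix.mul_one]
      rw [← Matrix.mul_assoc, k2, Matrix.one_mul]
    have := h _ hBmem
    rw [← Matrix.mul_assoc] at this
    exact this
  have hDzero : ∀ i j, D i j = 0 := by
    intro i j
    have htr := hDtr (Matrix.single i j 1 - Matrix.single j i 1)
      (by ext a b; simp [Matrix.single, Matrix.transpose_apply, and_comm])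
    rw [Matrix.mul_sub, Matrix.trace_sub, trace_mul_std, trace_mul_std] at htr
    have h2 : D j i = -D i j := by
      have := congrFun (congrFun hDanti i) j
      simpa [Matrix.transpose_apply] using this
    rw [h2] at htr
    linear_combination (-1/2 : ℂ) * htr
  have hD0 : D = 0 := by ext i j; exact hDzero i j
  calc W = W * (J⁻¹ * J) := by rw [k1, Matrix.mul_one]
  _ = D * J := by rw [← Matrix.mul_assoc]
  _ = 0 := by rw [hD0, Matrix.zero_mul]

lemma nondegP (W : Matrix (Fin m) (Fin m) ℂ) (hW : W ∈ isomAlg m J)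
    (h : ∀ A ∈ isomAlg m J, Matrix.trace (W * A) = 0) : W = 0 := by
  have k1 := hK1' hJ; have k2 := hK2' hJ; have kT := hKT' hJskew hJ
  have hWT : Wᵀ = -(J * W * J⁻¹) := by
    have h0 := memP.mp hW
    calc Wᵀ = Wᵀ * (J * J⁻¹) := by rw [k2, Matrix.mul_one]
    _ = Wᵀ * J * J⁻¹ := by rw [Matrix.mul_assoc]
    _ = -(J * W) * J⁻¹ := by rw [h0]
    _ = -(J * W * J⁻¹) := by rw [Matrix.neg_mul]
  set D := W * J⁻¹ with hDdef
  have hDsym : Dᵀ = D := by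
    rw [hDdef, Matrix.transpose_mul, kT, hWT]
    rw [Matrix.mul_neg, Matrix.neg_mul, neg_neg]
    rw [← Matrix.mul_assoc, ← Matrix.mul_assoc, k1, Matrix.one_mul]
  have hDtr : ∀ A' : Matrix (Fin m) (Fin m) ℂ, A'ᵀ = A' →
      Matrix.trace (D * A') = 0 := by
    intro A' hA'
    have hBmem : J⁻¹ * A' ∈ isomAlg m J := by
      rw [memP, Matrix.transpose_mul, kT]
      rw [Matrix.mul_neg, hA', Matrix.neg_mul]
      rw [Matrix.mul_assoc, k1, Matrix.mul_one]
      rw [← Matrix.mul_assoc, k2, Matrix.one_mul]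
    have := h _ hBmem
    rw [← Matrix.mul_assoc] at this
    exact this
  have hDzero : ∀ i j, D i j = 0 := by
    intro i j
    have htr := hDtr (Matrix.single i j 1 + Matrix.single j i 1)
      (by ext a b; simp [Matrix.single, Matrix.transpose_apply, and_comm]; ring)
    rw [Matrix.mul_add, Matrix.trace_add, trace_mul_std, trace_mul_std] at htr
    have h2 : D j i = D i j := by
      have := congrFun (congrFun hDsym i) j
      simpa [Matrix.transpose_apply] using this
    rw [h2] at htr
    linear_combination (1/2 : ℂ) * htr
  have hD0 : D = 0 := by ext i j; exact hDzero i j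
  calc W = W * (J⁻¹ * J) := by rw [k1, Matrix.mul_one]
  _ = D * J := by rw [← Matrix.mul_assoc]
  _ = 0 := by rw [hD0, Matrix.zero_mul]

end Facts
end Symp


/-- Let `X` be a nilpotent self-adjoint endomorphism of `ℂ^m` with respect to
a nondegenerate symplectic form `J`, with Jordan partition having conjugate partition
`s_i = rank X^{i-1} - rank X^i`.  The dimension of the `Sp(V)`-orbit of `X` under
conjugation (which equals `dim sp - dim` of the stabilizer Lie algebra of `X` in `sp`)
equals `(m² - Σ_i s_i²)/2`. -/
theorem stmt3 (m : ℕ) (J : Matrix (Fin m) (Fin m) ℂ)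
    (hJskew : Jᵀ = -J) (hJ : IsUnit J)
    (X : Matrix (Fin m) (Fin m) ℂ)
    (hnil : IsNilpotent X) (hsa : Xᵀ * J = J * X) :
    2 * ((Module.finrank ℂ (isomAlg m J) : ℤ) - (Module.finrank ℂ (stabAlg m J X) : ℤ)) =
      (m : ℤ) ^ 2 -
        ∑ i ∈ Finset.range m, (((X ^ i).rank : ℤ) - ((X ^ (i + 1)).rank : ℤ)) ^ 2 := by
  classical
  set P := isomAlg m J with hPdef
  set QM := symAlg m J with hQMdef
  set C := LinearMap.ker (LinearMap.mulLeft ℂ X - LinearMap.mulRight ℂ X) with hCdef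
  have memC : ∀ {Z : Matrix (Fin m) (Fin m) ℂ}, Z ∈ C ↔ X * Z = Z * X :=
    fun {Z} => mem_ker_mulLR
  -- the bilinear pairing
  let Φ₀ : Matrix (Fin m) (Fin m) ℂ →ₗ[ℂ] Matrix (Fin m) (Fin m) ℂ →ₗ[ℂ] ℂ :=
    LinearMap.mk₂ ℂ (fun Z W => Matrix.trace ((X * Z - Z * X) * W))
      (by intro a b c
          simp only [Matrix.mul_add, Matrix.add_mul, Matrix.sub_mul, Matrix.mul_sub]
          rw [← Matrix.trace_add]
          congr 1
          abel)
      (by intro r a c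
          simp only [Matrix.mul_smul, Matrix.smul_mul, ← smul_sub, Matrix.trace_smul])
      (by intro a b c
          simp only [Matrix.mul_add, Matrix.trace_add])
      (by intro r a c
          simp only [Matrix.mul_smul, Matrix.trace_smul])
  let Φ : ↥P →ₗ[ℂ] ↥QM →ₗ[ℂ] ℂ := Φ₀.compl₁₂ P.subtype QM.subtype
  have hΦapp : ∀ (A : ↥P) (B : ↥QM),
      Φ A B = Matrix.trace ((X * (A : Matrix (Fin m) (Fin m) ℂ) -
        (A : Matrix (Fin m) (Fin m) ℂ) * X) * (B : Matrix (Fin m) (Fin m) ℂ)) :=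
    fun A B => rfl
  have trace_swap : ∀ Z W : Matrix (Fin m) (Fin m) ℂ,
      Matrix.trace ((X * Z - Z * X) * W) = Matrix.trace ((W * X - X * W) * Z) := by
    intro Z W
    rw [Matrix.sub_mul, Matrix.sub_mul, Matrix.trace_sub, Matrix.trace_sub,
      Matrix.trace_mul_cycle X Z W, Matrix.trace_mul_cycle X W Z]
  have hkerΦ : LinearMap.ker Φ = Submodule.comap P.subtype C := by
    ext A
    rw [LinearMap.mem_ker, Submodule.mem_comap]
    constructor
    · intro hA
      have h0 : X * (A : Matrix (Fin m) (Fin m) ℂ) - (A : Matrix (Fin m) (Fin m) ℂ) * X = 0 := by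
        apply nondegQ hJskew hJ _ (TmapsQ X (A : Matrix (Fin m) (Fin m) ℂ) hsa A.2)
        intro B hB
        have h1 := DFunLike.congr_fun hA ⟨B, hB⟩
        rw [hΦapp] at h1
        exact h1
      rw [memC]
      rw [sub_eq_zero] at h0
      exact h0
    · intro hA
      rw [memC] at hA
      refine LinearMap.ext fun B => ?_
      rw [LinearMap.zero_apply, hΦapp]
      have hA' : X * (A : Matrix (Fin m) (Fin m) ℂ) = (A : Matrix (Fin m) (Fin m) ℂ) * X := hA
      rw [sub_eq_zero.mpr hA', Matrix.zero_mul, Matrix.trace_zero]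
  have hkerΦf : LinearMap.ker Φ.flip = Submodule.comap QM.subtype C := by
    ext B
    rw [LinearMap.mem_ker, Submodule.mem_comap]
    constructor
    · intro hB
      have h0 : (B : Matrix (Fin m) (Fin m) ℂ) * X - X * (B : Matrix (Fin m) (Fin m) ℂ) = 0 := by
        apply nondegP hJskew hJ _ (TmapsP X (B : Matrix (Fin m) (Fin m) ℂ) hsa B.2)
        intro A hA
        have h1 := DFunLike.congr_fun hB ⟨A, hA⟩
        rw [LinearMap.flip_apply, hΦapp, trace_swap, LinearMap.zero_apply] at h1
        exact h1
      rw [memC]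
      rw [sub_eq_zero] at h0
      exact h0.symm
    · intro hB
      rw [memC] at hB
      refine LinearMap.ext fun A => ?_
      rw [LinearMap.zero_apply, LinearMap.flip_apply, hΦapp, trace_swap]
      have hB' : (B : Matrix (Fin m) (Fin m) ℂ) * X - X * (B : Matrix (Fin m) (Fin m) ℂ) = 0 := by
        rw [sub_eq_zero]
        exact (hB : X * (B : Matrix (Fin m) (Fin m) ℂ) = (B : Matrix (Fin m) (Fin m) ℂ) * X).symm
      rw [hB', Matrix.zero_mul, Matrix.trace_zero]
  -- rank--nullity on both sides
  have hcomap : ∀ (S : Submodule ℂ (Matrix (Fin m) (Fin m) ℂ)),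
      finrank ℂ ↥(Submodule.comap S.subtype C) = finrank ℂ ↥(C ⊓ S) := by
    intro S
    have he : Submodule.comap S.subtype C = Submodule.comap S.subtype (C ⊓ S) := by
      ext x
      simp only [Submodule.mem_comap, Submodule.mem_inf]
      exact ⟨fun h => ⟨h, x.2⟩, fun h => h.1⟩
    rw [he]
    exact (Submodule.comapSubtypeEquivOfLe inf_le_right).finrank_eq
  have hPfin : finrank ℂ ↥P = finrank ℂ ↥(LinearMap.range Φ) + finrank ℂ ↥(C ⊓ P) := by
    have h1 := LinearMap.finrank_range_add_finrank_ker Φ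
    rw [hkerΦ, hcomap] at h1
    omega
  have hQfin : finrank ℂ ↥QM = finrank ℂ ↥(LinearMap.range Φ) + finrank ℂ ↥(C ⊓ QM) := by
    have h1 := LinearMap.finrank_range_add_finrank_ker Φ.flip
    rw [hkerΦf, hcomap, flip_rank] at h1
    omega
  -- dimension of the full space
  have htop : finrank ℂ ↥P + finrank ℂ ↥QM = m * m := by
    have h1 := Submodule.finrank_sup_add_finrank_inf_eq P QM
    rw [hPdef, hQMdef, PQtop hJskew hJ, PQbot hJskew hJ, finrank_top, finrank_bot,
      add_zero] at h1
    rw [← h1, Module.finrank_matrix, Fintype.card_fin, Module.finrank_self, mul_one]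
  -- decomposition of the centralizer
  have hCtop : (C ⊓ P) ⊔ (C ⊓ QM) = C := by
    apply le_antisymm (sup_le inf_le_left inf_le_left)
    intro Z hZ
    have hZC : X * Z = Z * X := memC.mp hZ
    have hsum : Z = (2⁻¹ : ℂ) • (Z - J⁻¹ * Zᵀ * J) + (2⁻¹ : ℂ) • (Z + J⁻¹ * Zᵀ * J) := by
      module
    have hθC : J⁻¹ * Zᵀ * J ∈ C := by
      rw [memC]
      exact thetaComm hJskew hJ X Z hsa hZC
    rw [hsum]
    exact Submodule.add_mem_sup
      ⟨C.smul_mem _ (C.sub_mem hZ hθC), Pdecomp hJskew hJ Z⟩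
      ⟨C.smul_mem _ (C.add_mem hZ hθC), Qdecomp hJskew hJ Z⟩
  have hCbot : (C ⊓ P) ⊓ (C ⊓ QM) = ⊥ := by
    rw [eq_bot_iff]
    calc (C ⊓ P) ⊓ (C ⊓ QM) ≤ P ⊓ QM := inf_le_inf inf_le_right inf_le_right
    _ = ⊥ := PQbot hJskew hJ
  have hCsum : finrank ℂ ↥(C ⊓ P) + finrank ℂ ↥(C ⊓ QM) = finrank ℂ ↥C := by
    have h1 := Submodule.finrank_sup_add_finrank_inf_eq (C ⊓ P) (C ⊓ QM)
    rw [hCtop, hCbot, finrank_bot, add_zero] at h1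
    omega
  have hCval := matrix_commutant_dim m X hnil
  have hstab : stabAlg m J X = C ⊓ P := inf_comm P C
  rw [hstab, pow_two]
  zify at hPfin hQfin htop hCsum
  linarith [hCval]
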